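/- Every α ∈ R has a GLS τ-adic expansion: there exist ℓ ∈ ℕ and digits c_0, …, c_{ℓ−1} ∈ D such that α = Σ_{i=0}^{ℓ−1} c_i·τ^i in R and for every i with 0 ≤ i ≤ ℓ−4 at least one of c_i, c_{i+1}, c_{i+2}, c_{i+3} equals 0. -/

import Mathlib

open Polynomial

noncomputable def P (μ : ℤ) : ℤ[X] := X ^ 4 - C μ * X ^ 3 - C (2 * μ) * X + 4

noncomputable abbrev Rg (μ : ℤ) := AdjoinRoot (P μ)

noncomputable def tau (μ : ℤ) : Rg μ := AdjoinRoot.root (P μ)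

/- ## Auxiliary development -/

abbrev V4 := ℤ × ℤ × ℤ × ℤ

/-- Trace form `Σ_σ |σ(a0+a1τ+a2τ²+a3τ³)|²`. -/
def mI (μ : ℤ) (a : V4) : ℤ :=
  4*a.1^2 + 8*a.2.1^2 + 16*a.2.2.1^2 + 32*a.2.2.2^2
  + 2*μ*a.1*a.2.1 + 2*a.1*a.2.2.1 + 14*μ*a.1*a.2.2.2
  + 4*μ*a.2.1*a.2.2.1 + 4*a.2.1*a.2.2.2 + 8*μ*a.2.2.1*a.2.2.2

/-- The digit extracted from `x`, congruent to `x` mod 4, in `[-3,3]`. -/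
def dg (v : Bool) (x : ℤ) : ℤ :=
  if x % 4 = 0 then 0 else if v then x % 4 else x % 4 - 4

/-- One division step: `stepv μ v a = (a - dg v a.1)/τ` on coordinates. -/
def stepv (μ : ℤ) (v : Bool) (a : V4) : V4 :=
  (a.2.1 + 2*μ*((a.1 - dg v a.1)/4), a.2.2.1,
   a.2.2.2 + μ*((a.1 - dg v a.1)/4), -((a.1 - dg v a.1)/4))

/-- There is a block of ≤ 4 digit-steps, ending with a zero digit, which
strictly decreases the measure. -/
def blockProp (μ : ℤ) (a : V4) : Prop :=
  ∃ v0 v1 v2 : Bool,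
    (a.1 % 4 = 0 ∧ mI μ (stepv μ true a) < mI μ a) ∨
    ((stepv μ v0 a).1 % 4 = 0 ∧
      mI μ (stepv μ true (stepv μ v0 a)) < mI μ a) ∨
    ((stepv μ v1 (stepv μ v0 a)).1 % 4 = 0 ∧
      mI μ (stepv μ true (stepv μ v1 (stepv μ v0 a))) < mI μ a) ∨
    ((stepv μ v2 (stepv μ v1 (stepv μ v0 a))).1 % 4 = 0 ∧
      mI μ (stepv μ true (stepv μ v2 (stepv μ v1 (stepv μ v0 a)))) < mI μ a)

def okB (μ : ℤ) (a : V4) : Bool :=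
  let M := mI μ a
  (a.1 % 4 == 0 && mI μ (stepv μ true a) < M) ||
  ([true, false].any fun v0 =>
    let s1 := stepv μ v0 a
    (s1.1 % 4 == 0 && mI μ (stepv μ true s1) < M) ||
    [true, false].any fun v1 =>
      let s2 := stepv μ v1 s1
      (s2.1 % 4 == 0 && mI μ (stepv μ true s2) < M) ||
      [true, false].any fun v2 =>
        let s3 := stepv μ v2 s2
        (s3.1 % 4 == 0 && mI μ (stepv μ true s3) < M))

def boxAll (μ : ℤ) : Bool :=
  (List.range 11).all fun i0 =>
  (List.range 7).all fun i1 =>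
  (List.range 5).all fun i2 =>
  (List.range 5).all fun i3 =>
    let a : V4 := ((i0:ℤ) - 5, (i1:ℤ) - 3, (i2:ℤ) - 2, (i3:ℤ) - 2)
    a = ((0:ℤ),(0:ℤ),(0:ℤ),(0:ℤ)) || okB μ a


set_option maxRecDepth 100000 in
set_option maxHeartbeats 4000000 in
lemma boxAll_one : boxAll 1 = true := by decide

set_option maxRecDepth 100000 in
set_option maxHeartbeats 4000000 in
lemma boxAll_negone : boxAll (-1) = true := by decide

/- ## basic digit lemmas -/

lemma dg_spec (v : Bool) (x : ℤ) :
    -3 ≤ dg v x ∧ dg v x ≤ 3 ∧ (x - dg v x) % 4 = 0 ∧ (x % 4 = 0 → dg v x = 0) := by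
  unfold dg; split_ifs <;> omega

lemma dg_zero {x : ℤ} (h : x % 4 = 0) (v : Bool) : dg v x = 0 := by
  unfold dg; simp [h]

/- ## the root equation -/

lemma tau_eq (μ : ℤ) : (tau μ)^4 = μ * (tau μ)^3 + 2*μ*(tau μ) - 4 := by
  have h : (AdjoinRoot.mk (P μ)) (P μ) = 0 := AdjoinRoot.mk_self
  have h2 : Polynomial.aeval (tau μ) (P μ) = 0 := by
    unfold tau; rw [AdjoinRoot.aeval_eq]; exact h
  simp only [P, map_add, map_sub, map_mul, map_pow, aeval_X, aeval_C, map_ofNat,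
    map_intCast, eq_intCast] at h2
  linear_combination h2

/- ## the coordinate map φ -/

noncomputable def phi (μ : ℤ) (a : V4) : Rg μ :=
  (a.1 : Rg μ) + (a.2.1 : Rg μ) * tau μ + (a.2.2.1 : Rg μ) * (tau μ)^2
    + (a.2.2.2 : Rg μ) * (tau μ)^3

lemma phi_step (μ : ℤ) (v : Bool) (a : V4) :
    phi μ a = ((dg v a.1 : ℤ) : Rg μ) + tau μ * phi μ (stepv μ v a) := by
  obtain ⟨k, hk⟩ : ∃ k, a.1 - dg v a.1 = 4 * k := by
    have := (dg_spec v a.1).2.2.1; exact ⟨(a.1 - dg v a.1)/4, by omega⟩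
  have hdiv : (a.1 - dg v a.1)/4 = k := by omega
  simp only [phi, stepv, hdiv]
  set c := dg v a.1 with hc
  have h1 : a.1 = 4*k + c := by omega
  rw [h1]
  push_cast
  linear_combination (k : Rg μ) * tau_eq μ

/- ## measure lemmas -/

lemma mI_step_id (μ : ℤ) (hμ : μ = 1 ∨ μ = -1) (v : Bool) (a : V4) :
    2 * mI μ (stepv μ v a) =
      mI μ a - 2 * dg v a.1 * (4*a.1 + μ*a.2.1 + a.2.2.1 + 7*μ*a.2.2.2)
        + 4 * (dg v a.1)^2 := by
  obtain ⟨k, hk⟩ : ∃ k, a.1 - dg v a.1 = 4 * k := by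
    have := (dg_spec v a.1).2.2.1; exact ⟨(a.1 - dg v a.1)/4, by omega⟩
  have hdiv : (a.1 - dg v a.1)/4 = k := by omega
  simp only [mI, stepv, hdiv]
  set c := dg v a.1 with hc
  have h1 : a.1 = 4*k + c := by omega
  rw [h1]
  rcases hμ with h | h <;> subst h <;> ring

lemma gsq_le (μ : ℤ) (hμ : μ = 1 ∨ μ = -1) (a : V4) :
    (4*a.1 + μ*a.2.1 + a.2.2.1 + 7*μ*a.2.2.2)^2 ≤ 4 * mI μ a := by
  obtain ⟨a0, a1, a2, a3⟩ := a
  simp only [mI]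
  rcases hμ with h | h <;> subst h <;>
    nlinarith [sq_nonneg (31*a1 + 7*a2 + a3), sq_nonneg (31*a1 - 7*a2 + a3),
      sq_nonneg (7*a2 + a3), sq_nonneg (7*a2 - a3), sq_nonneg a3]

lemma mI_step_le (μ : ℤ) (hμ : μ = 1 ∨ μ = -1) (v : Bool) (a : V4) :
    10 * mI μ (stepv μ v a) ≤ 8 * mI μ a + 480 := by
  have hid := mI_step_id μ hμ v a
  have hg := gsq_le μ hμ a
  have hd := dg_spec v a.1
  set c := dg v a.1
  set g := 4*a.1 + μ*a.2.1 + a.2.2.1 + 7*μ*a.2.2.2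
  nlinarith [sq_nonneg (3*g + 20*c), sq_nonneg (3*g - 20*c), hd.1, hd.2.1]

lemma mI_half (μ : ℤ) {a : V4} (h : a.1 % 4 = 0) (hμ : μ = 1 ∨ μ = -1) (v : Bool) :
    2 * mI μ (stepv μ v a) = mI μ a := by
  have hid := mI_step_id μ hμ v a
  rw [dg_zero h v] at hid
  linarith

lemma coord_bounds (μ : ℤ) (hμ : μ = 1 ∨ μ = -1) (a : V4) :
    17*a.1^2 ≤ 7 * mI μ a ∧ 68*a.2.1^2 ≤ 9 * mI μ a ∧
      136*a.2.2.1^2 ≤ 9 * mI μ a ∧ 136*a.2.2.2^2 ≤ 7 * mI μ a := by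
  obtain ⟨a0, a1, a2, a3⟩ := a
  simp only [mI]
  rcases hμ with h | h <;> subst h
  · exact ⟨by nlinarith [sq_nonneg (11*a0 + 7*a1 + 7*a2 + 49*a3),
        sq_nonneg (27*a1 + 5*a2 - 9*a3), sq_nonneg a2],
      by nlinarith [sq_nonneg (4*a0 + a1 + a2 + 7*a3),
        sq_nonneg (7*a1 + 63*a2 + 9*a3), sq_nonneg a3],
      by nlinarith [sq_nonneg (4*a0 + a1 + a2 + 7*a3),
        sq_nonneg (31*a1 + 7*a2 + a3), sq_nonneg (a2 + 9*a3)],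
      by nlinarith [sq_nonneg (4*a0 + a1 + a2 + 7*a3),
        sq_nonneg (31*a1 + 7*a2 + a3), sq_nonneg (7*a2 + a3)]⟩
  · exact ⟨by nlinarith [sq_nonneg (11*a0 - 7*a1 + 7*a2 - 49*a3),
        sq_nonneg (27*a1 - 5*a2 - 9*a3), sq_nonneg a2],
      by nlinarith [sq_nonneg (4*a0 - a1 + a2 - 7*a3),
        sq_nonneg (7*a1 - 63*a2 + 9*a3), sq_nonneg a3],
      by nlinarith [sq_nonneg (4*a0 - a1 + a2 - 7*a3),
        sq_nonneg (31*a1 - 7*a2 + a3), sq_nonneg (a2 - 9*a3)],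
      by nlinarith [sq_nonneg (4*a0 - a1 + a2 - 7*a3),
        sq_nonneg (31*a1 - 7*a2 + a3), sq_nonneg (7*a2 - a3)]⟩

lemma mI_nonneg (μ : ℤ) (hμ : μ = 1 ∨ μ = -1) (a : V4) : 0 ≤ mI μ a := by
  have := (coord_bounds μ hμ a).1
  nlinarith [sq_nonneg a.1]

lemma mI_pos (μ : ℤ) (hμ : μ = 1 ∨ μ = -1) {a : V4}
    (h : a ≠ ((0:ℤ),(0:ℤ),(0:ℤ),(0:ℤ))) : 0 < mI μ a := by
  rcases lt_or_eq_of_le (mI_nonneg μ hμ a) with h' | h'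
  · exact h'
  · exfalso
    obtain ⟨h1, h2, h3, h4⟩ := coord_bounds μ hμ a
    rw [← h'] at h1 h2 h3 h4
    apply h
    obtain ⟨a0, a1, a2, a3⟩ := a
    simp only [Prod.mk.injEq]
    refine ⟨?_, ?_, ?_, ?_⟩ <;> nlinarith

/- ## from the decided box check to blockProp -/

lemma anyPair {f : Bool → Bool} (h : ([true, false].any f) = true) :
    ∃ v, f v = true := by
  simp only [List.any_cons, List.any_nil, Bool.or_eq_true, Bool.or_false] at h
  rcases h with h | h
  · exact ⟨true, h⟩
  · exact ⟨false, h⟩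

lemma okB_sound (μ : ℤ) (a : V4) (h : okB μ a = true) : blockProp μ a := by
  unfold okB at h
  simp only [Bool.or_eq_true] at h
  rcases h with h | h
  · simp only [Bool.and_eq_true, beq_iff_eq, decide_eq_true_eq] at h
    exact ⟨true, true, true, Or.inl h⟩
  · obtain ⟨v0, h⟩ := anyPair h
    simp only [Bool.or_eq_true] at h
    rcases h with h | h
    · simp only [Bool.and_eq_true, beq_iff_eq, decide_eq_true_eq] at h
      exact ⟨v0, true, true, Or.inr (Or.inl h)⟩
    · obtain ⟨v1, h⟩ := anyPair h
      simp only [Bool.or_eq_true] at h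
      rcases h with h | h
      · simp only [Bool.and_eq_true, beq_iff_eq, decide_eq_true_eq] at h
        exact ⟨v0, v1, true, Or.inr (Or.inr (Or.inl h))⟩
      · obtain ⟨v2, h⟩ := anyPair h
        simp only [Bool.and_eq_true, beq_iff_eq, decide_eq_true_eq] at h
        exact ⟨v0, v1, v2, Or.inr (Or.inr (Or.inr h))⟩

lemma boxAll_spec (μ : ℤ) (hbox : boxAll μ = true) (a : V4)
    (h0 : -5 ≤ a.1 ∧ a.1 ≤ 5) (h1 : -3 ≤ a.2.1 ∧ a.2.1 ≤ 3)
    (h2 : -2 ≤ a.2.2.1 ∧ a.2.2.1 ≤ 2) (h3 : -2 ≤ a.2.2.2 ∧ a.2.2.2 ≤ 2)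
    (hne : a ≠ ((0:ℤ),(0:ℤ),(0:ℤ),(0:ℤ))) : okB μ a = true := by
  unfold boxAll at hbox
  rw [List.all_eq_true] at hbox
  have e0 := hbox ((a.1 + 5).toNat) (by rw [List.mem_range]; omega)
  rw [List.all_eq_true] at e0
  have e1 := e0 ((a.2.1 + 3).toNat) (by rw [List.mem_range]; omega)
  rw [List.all_eq_true] at e1
  have e2 := e1 ((a.2.2.1 + 2).toNat) (by rw [List.mem_range]; omega)
  rw [List.all_eq_true] at e2
  have e3 := e2 ((a.2.2.2 + 2).toNat) (by rw [List.mem_range]; omega)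
  have c0 : ((a.1 + 5).toNat : ℤ) - 5 = a.1 := by omega
  have c1 : ((a.2.1 + 3).toNat : ℤ) - 3 = a.2.1 := by omega
  have c2 : ((a.2.2.1 + 2).toNat : ℤ) - 2 = a.2.2.1 := by omega
  have c3 : ((a.2.2.2 + 2).toNat : ℤ) - 2 = a.2.2.2 := by omega
  simp only [c0, c1, c2, c3, Bool.or_eq_true, decide_eq_true_eq] at e3
  rcases e3 with h | h
  · exfalso; apply hne
    obtain ⟨b0, b1, b2, b3⟩ := a
    simpa using h
  · obtain ⟨b0, b1, b2, b3⟩ := a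
    exact h

lemma smallBlock (μ : ℤ) (hμ : μ = 1 ∨ μ = -1) {a : V4}
    (hne : a ≠ ((0:ℤ),(0:ℤ),(0:ℤ),(0:ℤ))) (h78 : mI μ a ≤ 78) : blockProp μ a := by
  obtain ⟨b0, b1, b2, b3⟩ := coord_bounds μ hμ a
  apply okB_sound
  apply boxAll_spec μ ?_ a
  · constructor <;> nlinarith
  · constructor <;> nlinarith
  · constructor <;> nlinarith
  · constructor <;> nlinarith
  · exact hne
  · rcases hμ with h | h <;> subst h
    · exact boxAll_one
    · exact boxAll_negone

/- ## large regime -/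

lemma choose_div4 (μ : ℤ) (hμ : μ = 1 ∨ μ = -1) (x : V4)
    (hx : ¬ x.1 % 4 = 0) (he : x.2.1 % 2 = 0) :
    ∃ v, (stepv μ v x).1 % 4 = 0 := by
  by_cases hc : (x.2.1 + 2*μ*((x.1 - x.1 % 4)/4)) % 4 = 0
  · refine ⟨true, ?_⟩
    simp only [stepv, dg, if_neg hx, if_true]
    exact hc
  · refine ⟨false, ?_⟩
    simp only [stepv, dg, if_neg hx, Bool.false_eq_true, if_false]
    rcases hμ with h | h <;> subst h <;> omega

lemma choose_even3 (μ : ℤ) (hμ : μ = 1 ∨ μ = -1) (x : V4)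
    (hx : ¬ x.1 % 4 = 0) :
    ∃ v, (stepv μ v x).2.2.1 % 2 = 0 := by
  by_cases hc : (x.2.2.2 + μ*((x.1 - x.1 % 4)/4)) % 2 = 0
  · refine ⟨true, ?_⟩
    simp only [stepv, dg, if_neg hx, if_true]
    exact hc
  · refine ⟨false, ?_⟩
    simp only [stepv, dg, if_neg hx, Bool.false_eq_true, if_false]
    rcases hμ with h | h <;> subst h <;> omega

lemma largeBlock (μ : ℤ) (hμ : μ = 1 ∨ μ = -1) (a : V4)
    (h79 : 79 ≤ mI μ a) : blockProp μ a := by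
  by_cases h0 : a.1 % 4 = 0
  · refine ⟨true, true, true, Or.inl ⟨h0, ?_⟩⟩
    have hh := mI_half μ h0 hμ true
    omega
  · by_cases h1 : a.2.1 % 2 = 0
    · obtain ⟨v0, hv0⟩ := choose_div4 μ hμ a h0 h1
      refine ⟨v0, true, true, Or.inr (Or.inl ⟨hv0, ?_⟩)⟩
      have hA := mI_step_le μ hμ v0 a
      have hB := mI_half μ hv0 hμ true
      linarith
    · by_cases h2 : a.2.2.1 % 2 = 0
      · -- s1 := stepv μ true a  has odd first coordinate, even second
        have hs1odd : ¬ (stepv μ true a).1 % 4 = 0 := by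
          simp only [stepv]
          rcases hμ with h | h <;> subst h <;> omega
        have hs1e : (stepv μ true a).2.1 % 2 = 0 := by
          simp only [stepv]; exact h2
        obtain ⟨v1, hv1⟩ := choose_div4 μ hμ (stepv μ true a) hs1odd hs1e
        refine ⟨true, v1, true, Or.inr (Or.inr (Or.inl ⟨hv1, ?_⟩))⟩
        have hA := mI_step_le μ hμ true a
        have hB := mI_step_le μ hμ v1 (stepv μ true a)
        have hC := mI_half μ hv1 hμ true
        linarith
      · -- a.2.1 and a.2.2.1 odd
        obtain ⟨v0, hv0⟩ := choose_even3 μ hμ a h0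
        have hs2odd : ¬ (stepv μ true (stepv μ v0 a)).1 % 4 = 0 := by
          have e1 : (stepv μ v0 a).2.1 = a.2.2.1 := rfl
          simp only [stepv, e1]
          rcases hμ with h | h <;> subst h <;> omega
        have hs2e : (stepv μ true (stepv μ v0 a)).2.1 % 2 = 0 := by
          have e1 : (stepv μ true (stepv μ v0 a)).2.1 = (stepv μ v0 a).2.2.1 := rfl
          rw [e1]; exact hv0
        obtain ⟨v2, hv2⟩ := choose_div4 μ hμ (stepv μ true (stepv μ v0 a)) hs2odd hs2e
        refine ⟨v0, true, v2, Or.inr (Or.inr (Or.inr ⟨hv2, ?_⟩))⟩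
        have hA := mI_step_le μ hμ v0 a
        have hB := mI_step_le μ hμ true (stepv μ v0 a)
        have hC := mI_step_le μ hμ v2 (stepv μ true (stepv μ v0 a))
        have hD := mI_half μ hv2 hμ true
        linarith

lemma exists_block (μ : ℤ) (hμ : μ = 1 ∨ μ = -1) {a : V4}
    (hne : a ≠ ((0:ℤ),(0:ℤ),(0:ℤ),(0:ℤ))) : blockProp μ a := by
  by_cases h : mI μ a ≤ 78
  · exact smallBlock μ hμ hne h
  · exact largeBlock μ hμ a (by omega)

/- ## GLS expansions -/

def GoodR (μ : ℤ) (x : Rg μ) : Prop :=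
  ∃ (ℓ : ℕ) (c : ℕ → ℤ),
    (∀ i < ℓ, -3 ≤ c i ∧ c i ≤ 3) ∧
    x = ∑ i ∈ Finset.range ℓ, (c i : Rg μ) * tau μ ^ i ∧
    (∀ i, i + 3 < ℓ → c i = 0 ∨ c (i + 1) = 0 ∨ c (i + 2) = 0 ∨ c (i + 3) = 0)

lemma goodR_prepend (μ : ℤ) (k : ℕ) (hk1 : 1 ≤ k) (hk4 : k ≤ 4) (d : ℕ → ℤ)
    (hd : ∀ i < k, -3 ≤ d i ∧ d i ≤ 3) (hlast : d (k - 1) = 0)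
    {x y : Rg μ} (hy : GoodR μ y)
    (hx : x = (∑ i ∈ Finset.range k, (d i : Rg μ) * tau μ ^ i) + tau μ ^ k * y) :
    GoodR μ x := by
  obtain ⟨ℓ, c, hb, hs, hw⟩ := hy
  refine ⟨k + ℓ, fun i => if i < k then d i else c (i - k), ?_, ?_, ?_⟩
  · intro i hi
    by_cases hik : i < k
    · simpa [hik] using hd i hik
    · simpa [hik] using hb (i - k) (by omega)
  · rw [hx, hs, Finset.sum_range_add]
    congr 1
    · exact Finset.sum_congr rfl fun i hi => by simp [Finset.mem_range.mp hi]
    · rw [Finset.mul_sum]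
      refine Finset.sum_congr rfl fun i _ => ?_
      have h1 : ¬ (k + i) < k := by omega
      simp only [h1, if_false, pow_add, Nat.add_sub_cancel_left]
      ring
  · intro i hi
    by_cases hik : i < k
    · rcases (by omega : k - 1 = i ∨ k - 1 = i + 1 ∨ k - 1 = i + 2 ∨ k - 1 = i + 3)
        with h | h | h | h
      · left; simp only [hik, show i = k - 1 by omega, if_true, hlast, if_pos]
        rw [if_pos (show k - 1 < k by omega)]
      · right; left
        simp only [show i + 1 < k by omega, show i + 1 = k - 1 by omega, hlast, if_pos]
        rw [if_pos (show k - 1 < k by omega)]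
      · right; right; left
        simp only [show i + 2 < k by omega, show i + 2 = k - 1 by omega, hlast, if_pos]
        rw [if_pos (show k - 1 < k by omega)]
      · right; right; right
        simp only [show i + 3 < k by omega, show i + 3 = k - 1 by omega, hlast, if_pos]
        rw [if_pos (show k - 1 < k by omega)]
    · have hw' := hw (i - k) (by omega)
      have e0 : i - k + 1 = i + 1 - k := by omega
      have e1 : i - k + 2 = i + 2 - k := by omega
      have e2 : i - k + 3 = i + 3 - k := by omega
      rw [e0, e1, e2] at hw'
      rcases hw' with h | h | h | h
      · left; simpa [hik] using h
      · right; left; simpa [show ¬ i + 1 < k by omega] using h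
      · right; right; left; simpa [show ¬ i + 2 < k by omega] using h
      · right; right; right; simpa [show ¬ i + 3 < k by omega] using h

/- ## main induction -/

lemma good_phi (μ : ℤ) (hμ : μ = 1 ∨ μ = -1) : ∀ a : V4, GoodR μ (phi μ a) := by
  suffices H : ∀ n : ℕ, ∀ a : V4, (mI μ a).toNat = n → GoodR μ (phi μ a) by
    intro a; exact H ((mI μ a).toNat) a rfl
  intro n
  induction n using Nat.strong_induction_on with
  | _ n ih =>
    intro a hn
    by_cases hz : a = ((0:ℤ),(0:ℤ),(0:ℤ),(0:ℤ))
    · subst hz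
      refine ⟨0, fun _ => 0, by omega, ?_, by omega⟩
      simp [phi]
    · have hpos := mI_pos μ hμ hz
      obtain ⟨v0, v1, v2, hblk⟩ := exists_block μ hμ hz
      have ihb : ∀ b : V4, mI μ b < mI μ a → GoodR μ (phi μ b) := fun b hb =>
        ih ((mI μ b).toNat) (by have := mI_nonneg μ hμ b; omega) b rfl
      rcases hblk with ⟨hdv, hlt⟩ | ⟨hdv, hlt⟩ | ⟨hdv, hlt⟩ | ⟨hdv, hlt⟩
      · -- block length 1, digit 0
        refine goodR_prepend μ 1 (by omega) (by omega) (fun _ => 0)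
          (by intro i _; omega) rfl (ihb _ hlt) ?_
        have h1 := phi_step μ true a
        rw [dg_zero hdv true] at h1
        simpa [Finset.sum_range_succ] using h1
      · -- block length 2
        refine goodR_prepend μ 2 (by omega) (by omega)
          (fun i => if i = 0 then dg v0 a.1 else 0)
          (by intro i _; have := dg_spec v0 a.1; split <;> omega) (by simp)
          (ihb _ hlt) ?_
        have h1 := phi_step μ v0 a
        have h2 := phi_step μ true (stepv μ v0 a)
        rw [dg_zero hdv true] at h2
        rw [h1, h2]
        simp [Finset.sum_range_succ]
        push_cast
        ring
      · -- block length 3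
        refine goodR_prepend μ 3 (by omega) (by omega)
          (fun i => if i = 0 then dg v0 a.1 else if i = 1 then
            dg v1 (stepv μ v0 a).1 else 0)
          (by intro i _
              have := dg_spec v0 a.1
              have := dg_spec v1 (stepv μ v0 a).1
              split <;> [omega; split <;> omega]) (by simp)
          (ihb _ hlt) ?_
        have h1 := phi_step μ v0 a
        have h2 := phi_step μ v1 (stepv μ v0 a)
        have h3 := phi_step μ true (stepv μ v1 (stepv μ v0 a))
        rw [dg_zero hdv true] at h3
        rw [h1, h2, h3]
        simp [Finset.sum_range_succ]
        push_cast
        ring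
      · -- block length 4
        refine goodR_prepend μ 4 (by omega) (by omega)
          (fun i => if i = 0 then dg v0 a.1 else if i = 1 then
            dg v1 (stepv μ v0 a).1 else if i = 2 then
            dg v2 (stepv μ v1 (stepv μ v0 a)).1 else 0)
          (by intro i _
              have := dg_spec v0 a.1
              have := dg_spec v1 (stepv μ v0 a).1
              have := dg_spec v2 (stepv μ v1 (stepv μ v0 a)).1
              split <;> [omega; split <;> [omega; split <;> omega]]) (by simp)
          (ihb _ hlt) ?_
        have h1 := phi_step μ v0 a
        have h2 := phi_step μ v1 (stepv μ v0 a)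
        have h3 := phi_step μ v2 (stepv μ v1 (stepv μ v0 a))
        have h4 := phi_step μ true (stepv μ v2 (stepv μ v1 (stepv μ v0 a)))
        rw [dg_zero hdv true] at h4
        rw [h1, h2, h3, h4]
        simp [Finset.sum_range_succ]
        push_cast
        ring

/- ## surjectivity of φ and the main theorem -/

lemma P_monic (μ : ℤ) : (P μ).Monic := by
  have h : P μ = X ^ 4 - (C μ * X ^ 3 + C (2*μ) * X - 4) := by unfold P; ring
  rw [h]
  apply Polynomial.monic_X_pow_sub
  have h3 : (C μ * X ^ 3 + C (2*μ) * X - 4 : ℤ[X]).degree ≤ (3 : ℕ) := by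
    compute_degree!
  exact lt_of_le_of_lt h3 (by norm_num)

lemma P_natDegree (μ : ℤ) : (P μ).natDegree = 4 := by
  unfold P
  compute_degree!

/-- Existence of GLS τ-adic expansions: every `α ∈ R` can be written as
`Σ c_i·τ^i` with digits `c_i ∈ {-3,…,3}` such that among any four consecutive
digits at least one is zero. -/
theorem stmt4 (μ : ℤ) (hμ : μ = 1 ∨ μ = -1) (α : Rg μ) :
    ∃ (ℓ : ℕ) (c : ℕ → ℤ),
      (∀ i < ℓ, -3 ≤ c i ∧ c i ≤ 3) ∧
      α = ∑ i ∈ Finset.range ℓ, (c i : Rg μ) * tau μ ^ i ∧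
      (∀ i, i + 3 < ℓ → c i = 0 ∨ c (i + 1) = 0 ∨ c (i + 2) = 0 ∨ c (i + 3) = 0) := by
  obtain ⟨f, hf⟩ := AdjoinRoot.mk_surjective α
  set r := f %ₘ P μ with hr
  have hmk : AdjoinRoot.mk (P μ) r = α := by
    conv_rhs => rw [← hf]
    conv_rhs => rw [← Polynomial.modByMonic_add_div f (P μ)]
    rw [map_add, map_mul, AdjoinRoot.mk_self]
    simp [hr]
  have hdeg : r.natDegree < 4 := by
    by_cases h0 : r = 0
    · rw [h0]; simp
    · have := Polynomial.degree_modByMonic_lt f (P_monic μ)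
      have h2 := Polynomial.natDegree_lt_natDegree h0 this
      rwa [P_natDegree μ] at h2
  have haev : Polynomial.aeval (tau μ) r = α := by
    unfold tau; rw [AdjoinRoot.aeval_eq]; exact hmk
  have hsum := Polynomial.aeval_eq_sum_range' hdeg (tau μ)
  rw [haev] at hsum
  have hphi : phi μ (r.coeff 0, r.coeff 1, r.coeff 2, r.coeff 3) = α := by
    rw [hsum]
    simp only [phi, Finset.sum_range_succ, Finset.sum_range_zero, zsmul_eq_mul]
    push_cast
    ring
  obtain ⟨ℓ, c, hb, hs, hw⟩ := good_phi μ hμ (r.coeff 0, r.coeff 1, r.coeff 2, r.coeff 3)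
  exact ⟨ℓ, c, hb, by rw [← hphi, hs], hw⟩
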